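/- The NAF representation of a positive integer n has minimal Hamming weight (number of nonzero digits) among all representations of n with digits in {-1,0,1}. -/
import Mathlib

open Finsupp

private def val (g : ℕ →₀ ℤ) : ℤ := g.sum fun i a => a * 2 ^ i

private noncomputable def shf (g : ℕ →₀ ℤ) : ℕ →₀ ℤ :=
  Finsupp.comapDomain Nat.succ g (Nat.succ_injective.injOn)

private lemma shf_apply (g : ℕ →₀ ℤ) (i : ℕ) : shf g i = g (i + 1) := rfl

private noncomputable def cns (d : ℤ) (h : ℕ →₀ ℤ) : ℕ →₀ ℤ :=
  Finsupp.single 0 d + Finsupp.mapDomain Nat.succ h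

private lemma cns_zero (d : ℤ) (h : ℕ →₀ ℤ) : cns d h 0 = d := by
  simp [cns, Finsupp.mapDomain_notin_range (f := Nat.succ) h 0 (by simp [Set.range, Nat.succ_ne_zero])]

private lemma cns_succ (d : ℤ) (h : ℕ →₀ ℤ) (i : ℕ) : cns d h (i + 1) = h i := by
  simp [cns, Finsupp.single_apply, Finsupp.mapDomain_apply Nat.succ_injective h i]

private lemma decomp (g : ℕ →₀ ℤ) : g = cns (g 0) (shf g) := by
  ext i
  cases i with
  | zero => rw [cns_zero]
  | succ k => rw [cns_succ, shf_apply]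

private lemma val_cns (d : ℤ) (h : ℕ →₀ ℤ) : val (cns d h) = d + 2 * val h := by
  rw [cns, val, Finsupp.sum_add_index' (by simp) (by intros; ring)]
  rw [Finsupp.sum_single_index (by simp)]
  rw [Finsupp.sum_mapDomain_index (by simp) (by intros; ring)]
  rw [val, Finsupp.mul_sum]
  simp only [pow_zero, mul_one]
  congr 1
  apply Finsupp.sum_congr
  intros
  rw [pow_succ]
  ring

private lemma card_cns (d : ℤ) (h : ℕ →₀ ℤ) :
    (cns d h).support.card = (if d = 0 then 0 else 1) + h.support.card := by
  have hdisj : Disjoint (Finsupp.single 0 d).support (Finsupp.mapDomain Nat.succ h).support := by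
    rw [Finsupp.mapDomain_support_of_injective Nat.succ_injective]
    refine Finset.disjoint_left.2 fun a ha hb => ?_
    have := Finsupp.support_single_subset ha
    simp at this
    subst this
    simp at hb
  rw [cns, Finsupp.support_add_eq hdisj, Finset.card_union_of_disjoint hdisj,
    Finsupp.mapDomain_support_of_injective Nat.succ_injective,
    Finset.card_image_of_injective _ Nat.succ_injective]
  by_cases hd : d = 0 <;> simp [hd, Finsupp.support_single_ne_zero]

private lemma val_decomp (g : ℕ →₀ ℤ) : val g = g 0 + 2 * val (shf g) := by
  conv_lhs => rw [decomp g]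
  rw [val_cns]

private lemma card_decomp (g : ℕ →₀ ℤ) :
    g.support.card = (if g 0 = 0 then 0 else 1) + (shf g).support.card := by
  conv_lhs => rw [decomp g]
  rw [card_cns]

private lemma rep_zero_aux : ∀ (B : ℕ) (g : ℕ →₀ ℤ),
    (∀ i, g i = -1 ∨ g i = 0 ∨ g i = 1) → val g = 0 → (∀ i, B ≤ i → g i = 0) → g = 0 := by
  intro B
  induction B with
  | zero => intro g _ _ hb; ext i; exact hb i (Nat.zero_le i)
  | succ B ih =>
    intro g hd hv hb
    have h0 : g 0 = 0 := by
      have := val_decomp g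
      rcases hd 0 with h | h | h <;> omega
    have hs : shf g = 0 := by
      refine ih (shf g) (fun i => by rw [shf_apply]; exact hd (i+1)) ?_ ?_
      · have := val_decomp g; omega
      · intro i hi; rw [shf_apply]; exact hb (i+1) (by omega)
    rw [decomp g, h0, hs]
    ext i
    cases i with
    | zero => rw [cns_zero]; rfl
    | succ k => rw [cns_succ]; rfl

private lemma rep_zero (g : ℕ →₀ ℤ) (hd : ∀ i, g i = -1 ∨ g i = 0 ∨ g i = 1)
    (hv : val g = 0) : g = 0 := by
  refine rep_zero_aux (g.support.sup id + 1) g hd hv fun i hi => ?_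
  by_contra h
  have : i ∈ g.support := Finsupp.mem_support_iff.2 h
  have := Finset.le_sup (f := id) this
  simp at this
  omega

/-- From any representation we can get a representation of val + ε at cost ≤ 1. -/
private lemma add_one : ∀ (C : ℕ) (g : ℕ →₀ ℤ) (ε : ℤ), g.support.card ≤ C →
    (ε = 1 ∨ ε = -1) → (∀ i, g i = -1 ∨ g i = 0 ∨ g i = 1) →
    ∃ h : ℕ →₀ ℤ, (∀ i, h i = -1 ∨ h i = 0 ∨ h i = 1) ∧ val h = val g + ε ∧
      h.support.card ≤ g.support.card + 1 := by
  intro C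
  induction C with
  | zero =>
    intro g ε hc hε hd
    have hg : g = 0 := Finsupp.card_support_eq_zero.1 (by omega)
    refine ⟨Finsupp.single 0 ε, ?_, ?_, ?_⟩
    · intro i
      rcases Nat.eq_zero_or_pos i with h | h
      · subst h; simp [Finsupp.single_apply]; omega
      · right; left; rw [Finsupp.single_apply]; simp; omega
    · rw [hg]; simp [val, Finsupp.sum_single_index]
    · calc (Finsupp.single 0 ε).support.card ≤ 1 := by
            apply Finset.card_le_card Finsupp.support_single_subset |>.trans; simp
        _ ≤ _ := by omega
  | succ C ih =>
    intro g ε hc hε hd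
    by_cases hcase : g 0 = ε
    · -- carry case
      have hcard : g.support.card = 1 + (shf g).support.card := by
        rw [card_decomp g]; simp [hcase]; omega
      obtain ⟨h', hd', hv', hc'⟩ := ih (shf g) ε (by omega) hε
        (fun i => by rw [shf_apply]; exact hd (i+1))
      refine ⟨cns 0 h', ?_, ?_, ?_⟩
      · intro i
        cases i with
        | zero => rw [cns_zero]; right; left; rfl
        | succ k => rw [cns_succ]; exact hd' k
      · rw [val_cns, hv', val_decomp g]; omega
      · rw [card_cns]; simp; omega
    · -- no carry: g 0 + ε ∈ {-1,0,1}
      refine ⟨cns (g 0 + ε) (shf g), ?_, ?_, ?_⟩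
      · intro i
        cases i with
        | zero => rw [cns_zero]; rcases hd 0 with h | h | h <;> omega
        | succ k => rw [cns_succ, shf_apply]; exact hd (k+1)
      · rw [val_cns, val_decomp g]; ring
      · rw [card_cns, card_decomp g]
        rcases hd 0 with h | h | h <;> rcases hε with he | he <;> subst he <;>
          simp [h] <;> omega

private lemma main : ∀ (N : ℕ) (f g : ℕ →₀ ℤ),
    (∀ i, f i = -1 ∨ f i = 0 ∨ f i = 1) → (∀ i, f i * f (i + 1) = 0) →
    (∀ i, g i = -1 ∨ g i = 0 ∨ g i = 1) → val g = val f → (val f).natAbs ≤ N →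
    f.support.card ≤ g.support.card := by
  intro N
  induction N with
  | zero =>
    intro f g hf1 hf2 hg1 hv hb
    have hf0 : f = 0 := rep_zero f hf1 (by omega)
    simp [hf0]
  | succ N ih =>
    intro f g hf1 hf2 hg1 hv hb
    by_cases hn0 : val f = 0
    · simp [rep_zero f hf1 hn0]
    have e1 : val f = f 0 + 2 * val (shf f) := val_decomp f
    have e1g : val g = g 0 + 2 * val (shf g) := val_decomp g
    by_cases hpar : f 0 = 0
    · -- even case
      have hg0 : g 0 = 0 := by rcases hg1 0 with h | h | h <;> omega
      have hrec := ih (shf f) (shf g)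
        (fun i => by rw [shf_apply]; exact hf1 (i+1))
        (fun i => by rw [shf_apply, shf_apply]; exact hf2 (i+1))
        (fun i => by rw [shf_apply]; exact hg1 (i+1))
        (by omega) (by omega)
      rw [card_decomp f, card_decomp g, if_pos hpar, if_pos hg0]
      omega
    · -- odd case
      have hε : f 0 = 1 ∨ f 0 = -1 := by rcases hf1 0 with h | h | h <;> tauto
      have hf10 : f 1 = 0 := (mul_eq_zero.1 (hf2 0)).resolve_left hpar
      have e2 : val (shf f) = shf f 0 + 2 * val (shf (shf f)) := val_decomp (shf f)
      have e3 : shf f 0 = 0 := by rw [shf_apply]; exact hf10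
      have e2g : val (shf g) = shf g 0 + 2 * val (shf (shf g)) := val_decomp (shf g)
      -- f-side digit facts
      have hfd2 : ∀ i, shf (shf f) i = -1 ∨ shf (shf f) i = 0 ∨ shf (shf f) i = 1 :=
        fun i => by rw [shf_apply, shf_apply]; exact hf1 (i+2)
      have hfn2 : ∀ i, shf (shf f) i * shf (shf f) (i+1) = 0 :=
        fun i => by rw [shf_apply, shf_apply, shf_apply, shf_apply]; exact hf2 (i+2)
      have cardf : f.support.card = 1 + (shf (shf f)).support.card := by
        rw [card_decomp f, card_decomp (shf f), if_neg hpar, if_pos e3]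
        omega
      have hbk : (val (shf (shf f))).natAbs ≤ N := by rcases hε with h | h <;> omega
      by_cases hδ : g 0 = f 0
      · -- same lowest digit
        have hrec := ih (shf f) (shf g)
          (fun i => by rw [shf_apply]; exact hf1 (i+1))
          (fun i => by rw [shf_apply, shf_apply]; exact hf2 (i+1))
          (fun i => by rw [shf_apply]; exact hg1 (i+1))
          (by omega) (by rcases hε with h | h <;> omega)
        have hgn : g 0 ≠ 0 := by omega
        rw [card_decomp f, card_decomp g, if_neg hpar, if_neg hgn]
        omega
      · -- opposite lowest digit
        have hδ' : g 0 = - f 0 := by rcases hg1 0 with h | h | h <;> rcases hε with h' | h' <;> omega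
        have hg1' : ∀ i, shf g i = -1 ∨ shf g i = 0 ∨ shf g i = 1 :=
          fun i => by rw [shf_apply]; exact hg1 (i+1)
        have hg1'' : ∀ i, shf (shf g) i = -1 ∨ shf (shf g) i = 0 ∨ shf (shf g) i = 1 :=
          fun i => by rw [shf_apply, shf_apply]; exact hg1 (i+2)
        have cardg : g.support.card = 2 + (shf (shf g)).support.card := by
          have h1 : g 0 ≠ 0 := by rcases hε with h | h <;> omega
          have h2 : shf g 0 ≠ 0 := by
            intro h
            rcases hε with h' | h' <;> omega
          rw [card_decomp g, card_decomp (shf g), if_neg h1, if_neg h2]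
          omega
        rcases hg1' 0 with hs | hs | hs
        all_goals rcases hε with hε1 | hε1
        -- enumerate: shf g 0 ∈ {-1,0,1}, f 0 ∈ {1,-1}
        all_goals first
        | -- contradiction (parity) when shf g 0 = 0
          (exfalso; omega)
        | -- shf g 0 = f 0 : direct recursion on shf (shf g)
          (have hrec := ih (shf (shf f)) (shf (shf g)) hfd2 hfn2 hg1''
            (by omega) (by omega)
           omega)
        | -- shf g 0 = - f 0 : use add_one
          (obtain ⟨h, hhd, hhv, hhc⟩ := add_one (shf (shf g)).support.card (shf (shf g))
            (- f 0) le_rfl (by omega) hg1''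
           have hrec := ih (shf (shf f)) h hfd2 hfn2 hhd (by omega) (by omega)
           omega)

/-- The NAF representation has minimal Hamming weight among all
{-1,0,1}-representations of n. -/
theorem stmt3 (n : ℕ) (hn : 0 < n) (f g : ℕ →₀ ℤ)
    (hf1 : ∀ i, f i = -1 ∨ f i = 0 ∨ f i = 1)
    (hf2 : ∀ i, f i * f (i + 1) = 0)
    (hfv : (f.sum fun i a => a * 2 ^ i) = (n : ℤ))
    (hg1 : ∀ i, g i = -1 ∨ g i = 0 ∨ g i = 1)
    (hgv : (g.sum fun i a => a * 2 ^ i) = (n : ℤ)) :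
    f.support.card ≤ g.support.card := by
  have hfv' : val f = (n : ℤ) := hfv
  have hgv' : val g = (n : ℤ) := hgv
  exact main (val f).natAbs f g hf1 hf2 hg1 (by rw [hfv', hgv']) le_rfl
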